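/- Let μ < 0 and ω, φ₀ ∈ ℝ. For t > 0 and φ ∈ ℝ define ρ(φ, t) = (1/(2π)) Σ_{n ∈ ℤ} exp((μ n² − i ω n) t) · exp(i n (φ − φ₀)). Then: (i) for every t > 0 the series converges absolutely; (ii) ρ(φ, t) is real-valued for all φ ∈ ℝ and t > 0; and (iii) ρ satisfies the Fokker-Planck equation of the phase diffusion, ∂_t ρ(φ, t) = −ω ∂_φ ρ(φ, t) − μ ∂²_φ ρ(φ, t), for all φ ∈ ℝ and t > 0. -/

import Mathlib

open Complex

noncomputable def pterm (μ ω φ₀ : ℝ) (φ t : ℝ) (n : ℤ) : ℂ :=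
  Complex.exp ((((μ * (n : ℝ) ^ 2 : ℝ) : ℂ) - Complex.I * ((ω * (n : ℝ) : ℝ) : ℂ)) * (t : ℂ))
    * Complex.exp (Complex.I * (n : ℂ) * ((φ - φ₀ : ℝ) : ℂ))

lemma normPterm (μ ω φ₀ φ t : ℝ) (n : ℤ) :
    ‖pterm μ ω φ₀ φ t n‖ = Real.exp (μ * (n : ℝ) ^ 2 * t) := by
  have h1 : (((((μ * (n : ℝ) ^ 2 : ℝ) : ℂ) - Complex.I * ((ω * (n : ℝ) : ℝ) : ℂ)) * (t : ℂ))).re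
      = μ * (n : ℝ) ^ 2 * t := by
    simp only [Complex.mul_re, Complex.mul_im, Complex.sub_re, Complex.sub_im,
      Complex.ofReal_re, Complex.ofReal_im, Complex.I_re, Complex.I_im]
    ring
  have h2 : (Complex.I * (n : ℂ) * ((φ - φ₀ : ℝ) : ℂ)).re = 0 := by
    simp [Complex.mul_re, Complex.mul_im]
  rw [pterm, norm_mul, Complex.norm_exp,
    Complex.norm_exp, h1, h2, Real.exp_zero, mul_one]

lemma sumExp {a : ℝ} (ha : a < 0) (k : ℕ) :
    Summable fun n : ℤ => |(n : ℝ)| ^ k * Real.exp (a * (n : ℝ) ^ 2) := by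
  have key : Summable fun m : ℕ => (m : ℝ) ^ k * Real.exp (a * (m : ℝ) ^ 2) := by
    have hr : ‖Real.exp a‖ < 1 := by
      rw [Real.norm_eq_abs, abs_of_pos (Real.exp_pos a)]
      exact Real.exp_lt_one_iff.mpr ha
    refine Summable.of_nonneg_of_le (fun m => by positivity) (fun m => ?_)
      (summable_pow_mul_geometric_of_norm_lt_one k hr)
    have h1 : Real.exp (a * (m : ℝ) ^ 2) = Real.exp a ^ (m ^ 2 : ℕ) := by
      rw [← Real.exp_nat_mul]; push_cast; ring_nf
    rw [h1]
    exact mul_le_mul_of_nonneg_left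
      (pow_le_pow_of_le_one (Real.exp_pos a).le (Real.exp_lt_one_iff.mpr ha).le
        (Nat.le_self_pow two_ne_zero m)) (by positivity)
  apply Summable.of_nat_of_neg
  · simpa using key
  · simpa using key

lemma expDeriv (a b : ℂ) (y : ℝ) :
    HasDerivAt (fun s : ℝ => Complex.exp (a * s + b)) (a * Complex.exp (a * y + b)) y := by
  have h1 : HasDerivAt (fun z : ℂ => a * z + b) a (y : ℂ) := by
    simpa using ((hasDerivAt_id (y : ℂ)).const_mul a).add_const b
  have h : HasDerivAt (fun z : ℂ => Complex.exp (a * z + b)) (a * Complex.exp (a * y + b)) (y:ℂ) := by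
    rw [mul_comm a (Complex.exp (a * y + b))]
    exact (Complex.hasDerivAt_exp (a * y + b)).comp (y : ℂ) h1
  exact h.comp_ofReal

lemma ptermDerivT (μ ω φ₀ φ t : ℝ) (n : ℤ) :
    HasDerivAt (fun s : ℝ => pterm μ ω φ₀ φ s n)
      ((((μ * (n : ℝ) ^ 2 : ℝ) : ℂ) - Complex.I * ((ω * (n : ℝ) : ℝ) : ℂ))
        * pterm μ ω φ₀ φ t n) t := by
  have := (expDeriv (((μ * (n : ℝ) ^ 2 : ℝ) : ℂ) - Complex.I * ((ω * (n : ℝ) : ℝ) : ℂ)) 0 t).mul_const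
    (Complex.exp (Complex.I * (n : ℂ) * ((φ - φ₀ : ℝ) : ℂ)))
  simpa [pterm, mul_assoc] using this

lemma ptermDerivPhi (μ ω φ₀ φ t : ℝ) (n : ℤ) :
    HasDerivAt (fun ψ : ℝ => pterm μ ω φ₀ ψ t n)
      (Complex.I * (n : ℂ) * pterm μ ω φ₀ φ t n) φ := by
  set C : ℂ := (((μ * (n : ℝ) ^ 2 : ℝ) : ℂ) - Complex.I * ((ω * (n : ℝ) : ℝ) : ℂ)) with hC
  have hfun : ∀ ψ : ℝ, pterm μ ω φ₀ ψ t n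
      = Complex.exp (C * t) * Complex.exp (Complex.I * (n : ℂ) * (ψ : ℂ)
          + -(Complex.I * (n : ℂ) * (φ₀ : ℂ))) := by
    intro ψ
    rw [pterm, ← hC]
    congr 1
    push_cast
    ring
  have h := (expDeriv (Complex.I * (n : ℂ)) (-(Complex.I * (n : ℂ) * (φ₀ : ℂ))) φ).const_mul
    (Complex.exp (C * t))
  have h2 := h.congr_of_eventuallyEq (Filter.Eventually.of_forall fun ψ => (hfun ψ))
  refine h2.congr_deriv ?_
  rw [hfun φ]
  ring

lemma normIpterm (μ ω φ₀ φ t : ℝ) (n : ℤ) :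
    ‖Complex.I * (n : ℂ) * pterm μ ω φ₀ φ t n‖
      = |(n : ℝ)| * Real.exp (μ * (n : ℝ) ^ 2 * t) := by
  rw [norm_mul, norm_mul, Complex.norm_I, one_mul, normPterm]
  norm_cast


/-- the eigenfunction expansion
`ρ(φ,t) = (1/2π) Σ_{n ∈ ℤ} exp((μn² − iωn)t)·exp(in(φ−φ₀))` converges absolutely for
`t > 0`, is real-valued, and solves the Fokker-Planck equation
`∂_t ρ = −ω ∂_φ ρ − μ ∂²_φ ρ` of the phase diffusion. -/
theorem stmt12 (μ ω φ₀ : ℝ) (hμ : μ < 0) (ρ : ℝ → ℝ → ℂ)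
    (hρ : ∀ φ t : ℝ, ρ φ t = (1 / (2 * Real.pi) : ℂ) * ∑' n : ℤ,
        Complex.exp ((((μ * (n : ℝ) ^ 2 : ℝ) : ℂ) - Complex.I * ((ω * (n : ℝ) : ℝ) : ℂ)) * (t : ℂ))
          * Complex.exp (Complex.I * (n : ℂ) * ((φ - φ₀ : ℝ) : ℂ))) :
    (∀ t : ℝ, 0 < t → ∀ φ : ℝ, Summable fun n : ℤ =>
        ‖Complex.exp ((((μ * (n : ℝ) ^ 2 : ℝ) : ℂ) - Complex.I * ((ω * (n : ℝ) : ℝ) : ℂ)) * (t : ℂ))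
          * Complex.exp (Complex.I * (n : ℂ) * ((φ - φ₀ : ℝ) : ℂ))‖) ∧
    (∀ t : ℝ, 0 < t → ∀ φ : ℝ, (ρ φ t).im = 0) ∧
    (∀ t : ℝ, 0 < t → ∀ φ : ℝ,
      deriv (fun s : ℝ => ρ φ s) t
        = -(ω : ℂ) * deriv (fun ψ : ℝ => ρ ψ t) φ
          - (μ : ℂ) * deriv (deriv (fun ψ : ℝ => ρ ψ t)) φ) := by
  -- summability of the norms
  have part1 : ∀ t : ℝ, 0 < t → ∀ φ : ℝ, Summable fun n : ℤ => ‖pterm μ ω φ₀ φ t n‖ := by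
    intro t ht φ
    have ha : μ * t < 0 := mul_neg_of_neg_of_pos hμ ht
    have h := sumExp ha 0
    simp only [pow_zero, one_mul] at h
    exact h.congr fun n => by rw [normPterm]; ring_nf
  have part1' : ∀ t : ℝ, 0 < t → ∀ φ : ℝ, Summable fun n : ℤ => pterm μ ω φ₀ φ t n :=
    fun t ht φ => (part1 t ht φ).of_norm
  refine ⟨fun t ht φ => part1 t ht φ, ?_, ?_⟩
  · -- real-valuedness
    intro t ht φ
    rw [hρ]
    have hconj : (starRingEnd ℂ) (∑' n : ℤ, pterm μ ω φ₀ φ t n) = ∑' n : ℤ, pterm μ ω φ₀ φ t n := by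
      have h1 : (starRingEnd ℂ) (∑' n : ℤ, pterm μ ω φ₀ φ t n)
          = ∑' n : ℤ, (starRingEnd ℂ) (pterm μ ω φ₀ φ t n) := tsum_star
      have h2 : ∀ n : ℤ, (starRingEnd ℂ) (pterm μ ω φ₀ φ t n) = pterm μ ω φ₀ φ t (-n) := by
        intro n
        simp only [pterm, ← Complex.exp_conj, map_mul, map_sub, Complex.conj_ofReal,
          Complex.conj_I, map_intCast]
        push_cast
        ring_nf
      rw [h1, tsum_congr h2]
      exact (Equiv.neg ℤ).tsum_eq (fun n => pterm μ ω φ₀ φ t n)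
    have him : (∑' n : ℤ, pterm μ ω φ₀ φ t n).im = 0 := Complex.conj_eq_iff_im.mp hconj
    have hre : (1 / (2 * (Real.pi : ℂ))).im = 0 := by
      rw [show (1 / (2 * (Real.pi : ℂ))) = ((1 / (2 * Real.pi) : ℝ) : ℂ) by push_cast; ring]
      exact Complex.ofReal_im _
    have him' : (∑' n : ℤ,
        Complex.exp ((((μ * (n : ℝ) ^ 2 : ℝ) : ℂ) - Complex.I * ((ω * (n : ℝ) : ℝ) : ℂ)) * (t : ℂ))
          * Complex.exp (Complex.I * (n : ℂ) * ((φ - φ₀ : ℝ) : ℂ))).im = 0 := him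
    rw [Complex.mul_im, him', hre]
    ring
  · -- the PDE
    intro t ht φ
    have ha : μ * t < 0 := mul_neg_of_neg_of_pos hμ ht
    have ha2 : μ * (t / 2) < 0 := mul_neg_of_neg_of_pos hμ (by linarith)
    -- derivative in t
    have hT : HasDerivAt (fun s : ℝ => ∑' n : ℤ, pterm μ ω φ₀ φ s n)
        (∑' n : ℤ, (((μ * (n : ℝ) ^ 2 : ℝ) : ℂ) - Complex.I * ((ω * (n : ℝ) : ℝ) : ℂ))
          * pterm μ ω φ₀ φ t n) t := by
      refine hasDerivAt_tsum_of_isPreconnected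
        (u := fun n : ℤ => (|μ| * |(n : ℝ)| ^ 2 + |ω| * |(n : ℝ)|)
          * Real.exp ((μ * (t / 2)) * (n : ℝ) ^ 2))
        ?_ (isOpen_Ioi (a := t / 2)) isPreconnected_Ioi
        (fun n y _ => ptermDerivT μ ω φ₀ φ y n) (fun n y hy => ?_)
        (Set.mem_Ioi.mpr (by linarith)) (part1' t ht φ) (Set.mem_Ioi.mpr (by linarith))
      · have := (((sumExp ha2 2).mul_left |μ|).add ((sumExp ha2 1).mul_left |ω|))
        exact this.congr fun n => by rw [pow_one]; ring
      · rw [norm_mul, normPterm]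
        have hC : ‖(((μ * (n : ℝ) ^ 2 : ℝ) : ℂ) - Complex.I * ((ω * (n : ℝ) : ℝ) : ℂ))‖
            ≤ |μ| * |(n : ℝ)| ^ 2 + |ω| * |(n : ℝ)| := by
          refine (norm_sub_le _ _).trans ?_
          refine le_of_eq ?_
          rw [norm_mul, Complex.norm_I, one_mul, Complex.norm_real, Complex.norm_real,
            Real.norm_eq_abs, Real.norm_eq_abs, abs_mul, abs_mul, _root_.abs_pow]
        have hE : Real.exp (μ * (n : ℝ) ^ 2 * y) ≤ Real.exp ((μ * (t / 2)) * (n : ℝ) ^ 2) := by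
          rw [Real.exp_le_exp]
          have h0 : μ * (n : ℝ) ^ 2 ≤ 0 :=
            mul_nonpos_of_nonpos_of_nonneg hμ.le (sq_nonneg _)
          have hy' : t / 2 ≤ y := le_of_lt (Set.mem_Ioi.mp hy)
          nlinarith
        exact mul_le_mul hC hE (Real.exp_pos _).le (by positivity)
    -- first derivative in φ
    have hG : ∀ ψ : ℝ, HasDerivAt (fun χ : ℝ => ∑' n : ℤ, pterm μ ω φ₀ χ t n)
        (∑' n : ℤ, Complex.I * (n : ℂ) * pterm μ ω φ₀ ψ t n) ψ := by
      intro ψ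
      refine hasDerivAt_tsum (u := fun n : ℤ => |(n : ℝ)| * Real.exp ((μ * t) * (n : ℝ) ^ 2))
        ?_ (fun n y => ptermDerivPhi μ ω φ₀ y t n) (fun n y => ?_) (part1' t ht φ) ψ
      · have := sumExp ha 1
        exact this.congr fun n => by rw [pow_one]
      · rw [normIpterm]
        exact le_of_eq (by ring_nf)
    -- second derivative in φ
    have hG2 : HasDerivAt (fun ψ : ℝ => ∑' n : ℤ, Complex.I * (n : ℂ) * pterm μ ω φ₀ ψ t n)
        (∑' n : ℤ, Complex.I * (n : ℂ) * (Complex.I * (n : ℂ) * pterm μ ω φ₀ φ t n)) φ := by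
      refine hasDerivAt_tsum (y₀ := φ)
        (u := fun n : ℤ => |(n : ℝ)| ^ 2 * Real.exp ((μ * t) * (n : ℝ) ^ 2))
        (sumExp ha 2) (fun n y => (ptermDerivPhi μ ω φ₀ y t n).const_mul (Complex.I * (n : ℂ)))
        (fun n y => ?_) ?_ φ
      · rw [norm_mul, normIpterm, norm_mul, Complex.norm_I, one_mul]
        refine le_of_eq ?_
        rw [show ‖((n : ℤ) : ℂ)‖ = |(n : ℝ)| by norm_cast]
        ring_nf
      · refine Summable.of_norm ?_
        have := sumExp ha 1
        refine this.congr fun n => ?_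
        rw [normIpterm, pow_one]
        ring_nf
    -- summabilities for the final rearrangement
    have s1 : Summable fun n : ℤ => Complex.I * (n : ℂ) * pterm μ ω φ₀ φ t n := by
      refine Summable.of_norm ?_
      refine (sumExp ha 1).congr fun n => ?_
      rw [normIpterm, pow_one]; ring_nf
    have s2 : Summable fun n : ℤ => Complex.I * (n : ℂ) * (Complex.I * (n : ℂ) * pterm μ ω φ₀ φ t n) := by
      refine Summable.of_norm ?_
      refine (sumExp ha 2).congr fun n => ?_
      rw [norm_mul, normIpterm, norm_mul, Complex.norm_I, one_mul,
        show ‖((n : ℤ) : ℂ)‖ = |(n : ℝ)| by norm_cast]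
      ring_nf
    -- rewrite the functions
    have hfunT : (fun s : ℝ => ρ φ s)
        = fun s : ℝ => (1 / (2 * Real.pi) : ℂ) * ∑' n : ℤ, pterm μ ω φ₀ φ s n :=
      funext fun s => hρ φ s
    have hfunP : (fun ψ : ℝ => ρ ψ t)
        = fun ψ : ℝ => (1 / (2 * Real.pi) : ℂ) * ∑' n : ℤ, pterm μ ω φ₀ ψ t n :=
      funext fun ψ => hρ ψ t
    have hD1 : deriv (fun ψ : ℝ => ρ ψ t)
        = fun ψ : ℝ => (1 / (2 * Real.pi) : ℂ)
            * ∑' n : ℤ, Complex.I * (n : ℂ) * pterm μ ω φ₀ ψ t n := by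
      funext ψ
      rw [hfunP]
      exact ((hG ψ).const_mul _).deriv
    have hD2 : deriv (deriv (fun ψ : ℝ => ρ ψ t)) φ
        = (1 / (2 * Real.pi) : ℂ)
            * ∑' n : ℤ, Complex.I * (n : ℂ) * (Complex.I * (n : ℂ) * pterm μ ω φ₀ φ t n) := by
      rw [hD1]
      exact (hG2.const_mul _).deriv
    have hDT : deriv (fun s : ℝ => ρ φ s) t
        = (1 / (2 * Real.pi) : ℂ)
            * ∑' n : ℤ, (((μ * (n : ℝ) ^ 2 : ℝ) : ℂ) - Complex.I * ((ω * (n : ℝ) : ℝ) : ℂ))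
                * pterm μ ω φ₀ φ t n := by
      rw [hfunT]
      exact (hT.const_mul _).deriv
    rw [hDT, hD2, hD1]
    have hterm : ∀ n : ℤ,
        (((μ * (n : ℝ) ^ 2 : ℝ) : ℂ) - Complex.I * ((ω * (n : ℝ) : ℝ) : ℂ)) * pterm μ ω φ₀ φ t n
          = -(ω : ℂ) * (Complex.I * (n : ℂ) * pterm μ ω φ₀ φ t n)
            - (μ : ℂ) * (Complex.I * (n : ℂ) * (Complex.I * (n : ℂ) * pterm μ ω φ₀ φ t n)) := by
      intro n
      push_cast
      linear_combination ((μ : ℂ) * (n : ℂ) ^ 2 * pterm μ ω φ₀ φ t n) * Complex.I_mul_I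
    calc (1 / (2 * Real.pi) : ℂ)
          * ∑' n : ℤ, (((μ * (n : ℝ) ^ 2 : ℝ) : ℂ) - Complex.I * ((ω * (n : ℝ) : ℝ) : ℂ))
              * pterm μ ω φ₀ φ t n
        = (1 / (2 * Real.pi) : ℂ)
            * ∑' n : ℤ, (-(ω : ℂ) * (Complex.I * (n : ℂ) * pterm μ ω φ₀ φ t n)
              - (μ : ℂ) * (Complex.I * (n : ℂ) * (Complex.I * (n : ℂ) * pterm μ ω φ₀ φ t n))) := by
          rw [tsum_congr hterm]
      _ = (1 / (2 * Real.pi) : ℂ)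
            * (-(ω : ℂ) * ∑' n : ℤ, Complex.I * (n : ℂ) * pterm μ ω φ₀ φ t n
              - (μ : ℂ) * ∑' n : ℤ, Complex.I * (n : ℂ)
                  * (Complex.I * (n : ℂ) * pterm μ ω φ₀ φ t n)) := by
          rw [Summable.tsum_sub (s1.mul_left _) (s2.mul_left _), tsum_mul_left, tsum_mul_left]
      _ = -(ω : ℂ) * ((1 / (2 * Real.pi) : ℂ) * ∑' n : ℤ, Complex.I * (n : ℂ) * pterm μ ω φ₀ φ t n)
          - (μ : ℂ) * ((1 / (2 * Real.pi) : ℂ) * ∑' n : ℤ, Complex.I * (n : ℂ)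
              * (Complex.I * (n : ℂ) * pterm μ ω φ₀ φ t n)) := by ring
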